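/- Let B''_1 and B''_2 be horoballs of type II in G'' = G × G' with the metric ρ_c: B''_i = {z : d_{θ_i}(z_1) + d_{θ'_i}(z_2)/c ≤ δ_i} for horofunctions θ_i on G and θ'_i on G'. Then B''_1 and B''_2 have the infinite touching property: there exist infinite sequences ξ^{(1)}_j ∈ B''_1 and ξ^{(2)}_j ∈ B''_2 such that sup_j ρ_c(ξ^{(1)}_j, ξ^{(2)}_j) < ∞ and both sequences leave every finite subset of G''. -/
import Mathlib


open Filter


private lemma chain_dist' {V : Type*} (G : SimpleGraph V) (hconn : G.Connected) (γ : ℕ → V)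
    (h : ∀ i, G.Adj (γ i) (γ (i + 1))) (i k : ℕ) : (G.dist (γ i) (γ (i + k)) : ℝ) ≤ k := by
  induction k with
  | zero => simp [SimpleGraph.dist_self]
  | succ k ih =>
      have h1 : G.dist (γ i) (γ (i + (k+1))) ≤ G.dist (γ i) (γ (i + k)) + G.dist (γ (i+k)) (γ (i+k+1)) := by
        have := hconn.dist_triangle (u := γ i) (v := γ (i+k)) (w := γ (i + (k+1)))
        simpa [Nat.add_assoc] using this
      have h2 : G.dist (γ (i+k)) (γ (i+k+1)) = 1 := (SimpleGraph.dist_eq_one_iff_adj).2 (h (i+k))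
      push_cast
      have : (G.dist (γ i) (γ (i + (k+1))) : ℝ) ≤ (G.dist (γ i) (γ (i + k)) : ℝ) + 1 := by
        exact_mod_cast h2 ▸ h1
      linarith

private lemma chain_lip {V : Type*} (G : SimpleGraph V) (hconn : G.Connected) (γ : ℕ → V)
    (h : ∀ i, G.Adj (γ i) (γ (i + 1))) (f : V → ℝ)
    (hlip : ∀ y z : V, |f y - f z| ≤ (G.dist y z : ℝ)) (k : ℕ) :
    f (γ k) ≤ f (γ 0) + k := by
  have h1 : |f (γ k) - f (γ 0)| ≤ (G.dist (γ 0) (γ k) : ℝ) := by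
    rw [SimpleGraph.dist_comm]; exact hlip _ _
  have h2 : (G.dist (γ 0) (γ (0 + k)) : ℝ) ≤ k := chain_dist' G hconn γ h 0 k
  simp only [Nat.zero_add] at h2
  have := abs_le.1 h1
  linarith [this.2]

/-- any two type II horoballs in the `ρ_c`-product of two infinite connected
locally finite graphs have the infinite touching property. -/
theorem typeII_horoballs_infinite_touching {V V' : Type*} [Infinite V] [Infinite V']
    (G : SimpleGraph V) (G' : SimpleGraph V')
    (hconn : G.Connected) (hconn' : G'.Connected)
    (hlf : G.LocallyFinite) (hlf' : G'.LocallyFinite)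
    (c : ℝ) (hc : 0 < c)
    (dθ₁ dθ₂ : V → ℝ) (dθ'₁ dθ'₂ : V' → ℝ)
    -- the horofunctions are 1-Lipschitz for the graph metrics
    (hlip₁ : ∀ y z : V, |dθ₁ y - dθ₁ z| ≤ (G.dist y z : ℝ))
    (hlip₂ : ∀ y z : V, |dθ₂ y - dθ₂ z| ≤ (G.dist y z : ℝ))
    (hlip'₁ : ∀ y z : V', |dθ'₁ y - dθ'₁ z| ≤ (G'.dist y z : ℝ))
    (hlip'₂ : ∀ y z : V', |dθ'₂ y - dθ'₂ z| ≤ (G'.dist y z : ℝ))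
    -- the geodesic-ray property of horofunctions
    (hray₁ : ∀ x : V, ∃ γ : ℕ → V, γ 0 = x ∧ (∀ i, G.Adj (γ i) (γ (i + 1))) ∧
      ∀ i : ℕ, dθ₁ (γ i) = dθ₁ x - i)
    (hray₂ : ∀ x : V, ∃ γ : ℕ → V, γ 0 = x ∧ (∀ i, G.Adj (γ i) (γ (i + 1))) ∧
      ∀ i : ℕ, dθ₂ (γ i) = dθ₂ x - i)
    (hray'₁ : ∀ x : V', ∃ γ : ℕ → V', γ 0 = x ∧ (∀ i, G'.Adj (γ i) (γ (i + 1))) ∧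
      ∀ i : ℕ, dθ'₁ (γ i) = dθ'₁ x - i)
    (hray'₂ : ∀ x : V', ∃ γ : ℕ → V', γ 0 = x ∧ (∀ i, G'.Adj (γ i) (γ (i + 1))) ∧
      ∀ i : ℕ, dθ'₂ (γ i) = dθ'₂ x - i)
    (δ₁ δ₂ : ℝ) :
    let ρc : V × V' → V × V' → ℝ := fun z w => (G.dist z.1 w.1 : ℝ) + (G'.dist z.2 w.2 : ℝ) / c
    let B₁ : Set (V × V') := {z | dθ₁ z.1 + dθ'₁ z.2 / c ≤ δ₁}
    let B₂ : Set (V × V') := {z | dθ₂ z.1 + dθ'₂ z.2 / c ≤ δ₂}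
    ∃ ξ₁ ξ₂ : ℕ → V × V',
      (∀ j, ξ₁ j ∈ B₁) ∧ (∀ j, ξ₂ j ∈ B₂) ∧
      (∃ K : ℝ, ∀ j, ρc (ξ₁ j) (ξ₂ j) ≤ K) ∧
      (∀ F : Set (V × V'), F.Finite → ∀ᶠ j in atTop, ξ₁ j ∉ F ∧ ξ₂ j ∉ F) := by
  intro ρc B₁ B₂
  obtain ⟨x⟩ : Nonempty V := inferInstance
  obtain ⟨x'⟩ : Nonempty V' := inferInstance
  obtain ⟨γ, hγ0, hγadj, hγval⟩ := hray₂ x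
  obtain ⟨γ', hγ'0, hγ'adj, hγ'val⟩ := hray'₁ x'
  set s : ℕ := ⌈max 0 (c * (dθ₁ x + dθ'₁ x' / c - δ₁))⌉₊ with hs_def
  set m : ℕ := ⌈max 0 (dθ₂ x + dθ'₂ x' / c + 1 + (s : ℝ) / c - δ₂)⌉₊ with hm_def
  have hs : c * (dθ₁ x + dθ'₁ x' / c - δ₁) ≤ (s : ℝ) :=
    le_trans (le_max_right _ _) (Nat.le_ceil _)
  have hs' : dθ₁ x + dθ'₁ x' / c - δ₁ ≤ (s : ℝ) / c := by
    rw [le_div_iff₀ hc]; linarith [hs]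
  have hm : dθ₂ x + dθ'₂ x' / c + 1 + (s : ℝ) / c - δ₂ ≤ (m : ℝ) :=
    le_trans (le_max_right _ _) (Nat.le_ceil _)
  refine ⟨fun n => (γ ⌊(n : ℝ) / c⌋₊, γ' (n + s)),
          fun n => (γ (⌊(n : ℝ) / c⌋₊ + m), γ' (n + s)), ?_, ?_, ⟨(m : ℝ), ?_⟩, ?_⟩
  · -- membership in B₁
    intro n
    set A : ℕ := ⌊(n : ℝ) / c⌋₊ with hA_def
    have hA_le : (A : ℝ) ≤ (n : ℝ) / c := Nat.floor_le (by positivity)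
    have h1 : dθ₁ (γ A) ≤ dθ₁ x + A := by
      have := chain_lip G hconn γ hγadj dθ₁ hlip₁ A
      rwa [hγ0] at this
    have h2 : dθ'₁ (γ' (n + s)) = dθ'₁ x' - ((n : ℝ) + s) := by
      have := hγ'val (n + s); push_cast at this ⊢; linarith
    show dθ₁ (γ A) + dθ'₁ (γ' (n + s)) / c ≤ δ₁
    rw [h2]
    have e : (dθ'₁ x' - ((n : ℝ) + s)) / c = dθ'₁ x' / c - (n : ℝ) / c - (s : ℝ) / c := by
      ring
    rw [e]; linarith
  · -- membership in B₂
    intro n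
    set A : ℕ := ⌊(n : ℝ) / c⌋₊ with hA_def
    have hA_ge : (n : ℝ) / c < A + 1 := Nat.lt_floor_add_one _
    have h1 : dθ₂ (γ (A + m)) = dθ₂ x - ((A : ℝ) + m) := by
      have := hγval (A + m); push_cast at this ⊢; linarith
    have h2 : dθ'₂ (γ' (n + s)) ≤ dθ'₂ x' + ((n : ℝ) + s) := by
      have := chain_lip G' hconn' γ' hγ'adj dθ'₂ hlip'₂ (n + s)
      rw [hγ'0] at this; push_cast at this; linarith
    have h3 : dθ'₂ (γ' (n + s)) / c ≤ (dθ'₂ x' + ((n : ℝ) + s)) / c := by gcongr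
    show dθ₂ (γ (A + m)) + dθ'₂ (γ' (n + s)) / c ≤ δ₂
    rw [h1]
    have e : (dθ'₂ x' + ((n : ℝ) + s)) / c = dθ'₂ x' / c + (n : ℝ) / c + (s : ℝ) / c := by
      ring
    rw [e] at h3; linarith
  · -- bounded distance
    intro n
    show (G.dist (γ ⌊(n : ℝ) / c⌋₊) (γ (⌊(n : ℝ) / c⌋₊ + m)) : ℝ)
        + (G'.dist (γ' (n + s)) (γ' (n + s)) : ℝ) / c ≤ (m : ℝ)
    rw [SimpleGraph.dist_self]
    have := chain_dist' G hconn γ hγadj ⌊(n : ℝ) / c⌋₊ m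
    simpa using this
  · -- leaving every finite set
    intro F hF
    have hinj : Function.Injective γ' := by
      intro a b hab
      have : dθ'₁ x' - (a : ℝ) = dθ'₁ x' - (b : ℝ) := by
        rw [← hγ'val a, ← hγ'val b, hab]
      exact_mod_cast (by linarith : (a : ℝ) = b)
    have hinj2 : Function.Injective (fun n : ℕ => γ' (n + s)) :=
      hinj.comp (fun a b h => by omega)
    have hfin : {n : ℕ | γ' (n + s) ∈ Prod.snd '' F}.Finite :=
      Set.Finite.preimage hinj2.injOn (hF.image _)
    rw [← Nat.cofinite_eq_atTop, eventually_cofinite]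
    refine hfin.subset ?_
    intro n hn
    simp only [Set.mem_setOf_eq, not_and, not_not] at hn ⊢
    by_cases h1 : (γ ⌊(n : ℝ) / c⌋₊, γ' (n + s)) ∈ F
    · exact ⟨_, h1, rfl⟩
    · exact ⟨_, hn h1, rfl⟩
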